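/- For coprime a and q, the sum ∑_{n ≡ a mod q} Λ(n)/n diverges, where Λ is the von Mangoldt function. -/
import Mathlib

open ArithmeticFunction

theorem not_summable_vonMangoldt_div_residueClass {q : ℕ} [NeZero q] {a : ZMod q}
    (ha : IsUnit a) :
    ¬ Summable (fun n : ℕ => if (n : ZMod q) = a then Λ n / n else 0) := by
  intro H
  have heq : (fun n : ℕ => if (n : ZMod q) = a then Λ n / n else 0) =
      fun n : ℕ => vonMangoldt.residueClass a n / n := by
    funext n
    simp only [vonMangoldt.residueClass, Set.indicator_apply, Set.mem_setOf_eq]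
    split_ifs <;> simp
  rw [heq] at H
  apply vonMangoldt.not_summable_residueClass_prime_div ha
  have := H.sub (vonMangoldt.summable_residueClass_non_primes_div a)
  refine this.congr fun n => ?_
  rw [← sub_div]
  congr 1
  split_ifs <;> simp
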